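/- Let (X,d,m) be an RCD(K,∞) space and v ∈ D(div) an L² vector field with divergence in L². Then for every t > 0 the vector field h_{H,t}(v) lies in H^{1,2}_C(TX) ∩ D(div) and its divergence satisfies div(h_{H,t}(v)) = P_t(div(v)), where P_t is the heat semigroup on functions. -/

import Mathlib

open MeasureTheory Filter Topology

theorem heatFlow_mem_sobolev_and_div_eq
    {F H : Type*} [NormedAddCommGroup F] [InnerProductSpace ℝ F] [CompleteSpace F]
    [NormedAddCommGroup H] [InnerProductSpace ℝ H] [CompleteSpace H]
    (Sob : Set F) (grad : F → H)
    (P : ℝ → F → F) (hH : ℝ → H → H)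
    (HHspace HC Ddiv : Set H) (dvg : H → F)
    (hHH_sub_HC : HHspace ⊆ HC)
    (hdiv_char : ∀ v ∈ Ddiv, ∀ f ∈ Sob, inner ℝ (grad f) v = (-(inner ℝ f (dvg v)) : ℝ))
    (hdiv_def : ∀ (v : H) (g : F), (∀ f ∈ Sob, inner ℝ (grad f) v = (-(inner ℝ f g) : ℝ)) →
      v ∈ Ddiv ∧ dvg v = g)
    (hP_sob : ∀ f ∈ Sob, ∀ t : ℝ, 0 ≤ t → P t f ∈ Sob)
    (hP_sa : ∀ (f g : F) (t : ℝ), 0 ≤ t → inner ℝ (P t f) g = (inner ℝ f (P t g) : ℝ))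
    (hH_sa : ∀ (v w : H) (t : ℝ), 0 ≤ t → inner ℝ (hH t v) w = (inner ℝ v (hH t w) : ℝ))
    (hcommute : ∀ f ∈ Sob, ∀ t : ℝ, 0 ≤ t → hH t (grad f) = grad (P t f))
    (hreg : ∀ (v : H) (t : ℝ), 0 < t → hH t v ∈ HHspace)
    (v : H) (hv : v ∈ Ddiv) (t : ℝ) (ht : 0 < t) :
    hH t v ∈ HC ∧ hH t v ∈ Ddiv ∧ dvg (hH t v) = P t (dvg v) := by
  have key : ∀ f ∈ Sob, inner ℝ (grad f) (hH t v) = (-(inner ℝ f (P t (dvg v))) : ℝ) := by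
    intro f hf
    have h1 : inner ℝ (grad f) (hH t v) = (inner ℝ (hH t (grad f)) v : ℝ) :=
      (hH_sa (grad f) v t ht.le).symm ▸ rfl
    rw [h1, hcommute f hf t ht.le, hdiv_char v hv (P t f) (hP_sob f hf t ht.le),
      hP_sa f (dvg v) t ht.le]
  obtain ⟨h1, h2⟩ := hdiv_def (hH t v) (P t (dvg v)) key
  exact ⟨hHH_sub_HC (hreg v t ht), h1, h2⟩
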